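/- Let (Λ_Q, f) be a C^{1+Lip} expansive and transitive Markov system. Then {x ∈ Λ_Q : χ(x) > 0} = ⋃_{α > 0} H_HT(α); that is, a point of Λ_Q has positive Lyapunov exponent if and only if it has infinitely many hyperbolic times with some positive exponent. -/

import Mathlib

open Set Metric Filter MeasureTheory
open scoped Classical

/-- The word `[ω 0, ω 1, …, ω (n-1)]` read off from the sequence `ω`. -/
def wordOf {p : ℕ} (ω : ℕ → Fin p) (n : ℕ) : List (Fin p) :=
  (List.range n).map ω

/-- The cylinder sets `Δ_{i₁…iₙ} = g_{i₁…i_{n-1}}(I_{iₙ})` of the iterated function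
system given by the big interval `I`, the subintervals `Isub i` and the maps `g i`;
by convention `Δ_∅ = I`. -/
def cylOf {p : ℕ} (I : Set ℝ) (Isub : Fin p → Set ℝ) (g : Fin p → ℝ → ℝ) :
    List (Fin p) → Set ℝ
  | [] => I
  | [i] => Isub i
  | i :: j :: w => g i '' cylOf I Isub g (j :: w)

/-- The sequence `ω` contains the word `w` as a sub-word starting at position `n`. -/
def containsAt {p : ℕ} (ω : ℕ → Fin p) (w : List (Fin p)) (n : ℕ) : Prop :=
  ∀ k : ℕ, (hk : k < w.length) → ω (n + k) = w.get ⟨k, hk⟩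

/-- The sequence `ω` belongs to `Σ_Q`, i.e. it contains no word of `Q` as a sub-word. -/
def avoids {p : ℕ} (Q : Finset (List (Fin p))) (ω : ℕ → Fin p) : Prop :=
  ∀ w ∈ Q, ∀ n : ℕ, ¬ containsAt ω w n

/-- The limit set `Λ_Q = π(Σ_Q)`: points lying, for some `ω ∈ Σ_Q`, in all the
cylinders `Δ_{ω₀…ω_{n-1}}`. -/
def limitSetOf {p : ℕ} (I : Set ℝ) (Isub : Fin p → Set ℝ) (g : Fin p → ℝ → ℝ)
    (Q : Finset (List (Fin p))) : Set ℝ :=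
  { x | ∃ ω : ℕ → Fin p, avoids Q ω ∧ ∀ n : ℕ, x ∈ cylOf I Isub g (wordOf ω n) }

/-- `gIter g ω n = g_{i_n … i_1} = g_{ω (n-1)} ∘ ⋯ ∘ g_{ω 0}`. -/
def gIter {p : ℕ} (g : Fin p → ℝ → ℝ) (ω : ℕ → Fin p) : ℕ → ℝ → ℝ
  | 0 => id
  | n + 1 => g (ω n) ∘ gIter g ω n

/-- The derivative of the composition `gIter g ω n` at `x` (chain rule product). -/
noncomputable def gIterDer {p : ℕ} (g gder : Fin p → ℝ → ℝ) (ω : ℕ → Fin p)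
    (n : ℕ) (x : ℝ) : ℝ :=
  ∏ k ∈ Finset.range n, gder (ω k) (gIter g ω k x)

/-- Prepending the finite word `w` to the infinite sequence `ω`. -/
def prependWord {p : ℕ} (w : List (Fin p)) (ω : ℕ → Fin p) : ℕ → Fin p :=
  fun n => if h : n < w.length then w.get ⟨n, h⟩ else ω (n - w.length)

/-- `l(Σ_Q)`: the minimum, over all finite sets `Q'` of words with `Σ_{Q'} = Σ_Q`,
of the maximal length `l(Q')` of words of `Q'`. -/
noncomputable def minRepLen {p : ℕ} (Q : Finset (List (Fin p))) : ℕ :=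
  sInf { n : ℕ | ∃ Q' : Finset (List (Fin p)),
    (∀ ω : ℕ → Fin p, avoids Q' ω ↔ avoids Q ω) ∧ Q'.sup List.length = n }

/-- A `C^{1+Lip}` expansive and transitive Markov system `(Λ_Q, f)`. -/
structure ExpansiveMarkovSystem (p : ℕ) where
  /-- the alphabet is nonempty -/
  hp : 0 < p
  /-- the ambient closed interval `I` -/
  I : Set ℝ
  hI : ∃ a b : ℝ, a < b ∧ I = Set.Icc a b
  /-- the pairwise disjoint closed subintervals `I₁, …, I_p` -/
  Isub : Fin p → Set ℝ
  hIsub : ∀ i, ∃ a b : ℝ, a < b ∧ Isub i = Set.Icc a b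
  hsubI : ∀ i, Isub i ⊆ I
  hdisj : ∀ i j, i ≠ j → Disjoint (Isub i) (Isub j)
  /-- the contractions `g i`, defined on `⋃ j, Isub j` -/
  g : Fin p → ℝ → ℝ
  /-- the derivative of `g i` on `⋃ j, Isub j` -/
  gder : Fin p → ℝ → ℝ
  hg_inj : ∀ i, Set.InjOn (g i) (⋃ j, Isub j)
  hg_range : ∀ i, g i '' (⋃ j, Isub j) ⊆ interior (Isub i)
  hg_deriv : ∀ i, ∀ x ∈ ⋃ j, Isub j,
    HasDerivWithinAt (g i) (gder i x) (⋃ j, Isub j) x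
  hgder_ne : ∀ i, ∀ x ∈ ⋃ j, Isub j, gder i x ≠ 0
  hgder_cont : ∀ i, ContinuousOn (gder i) (⋃ j, Isub j)
  /-- `log |g i'|` is Lipschitz on the domain -/
  hgder_lip : ∀ i, ∃ θ : ℝ, ∀ x ∈ ⋃ j, Isub j, ∀ y ∈ ⋃ j, Isub j,
    abs (Real.log (abs (gder i x)) - Real.log (abs (gder i y))) ≤ θ * |x - y|
  /-- the expanding map `f`, with `f (g i x) = x` -/
  f : ℝ → ℝ
  /-- the derivative `f'` of `f` on the ranges of the `g i` -/
  fder : ℝ → ℝ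
  hf : ∀ i, ∀ x ∈ ⋃ j, Isub j, f (g i x) = x
  hfder : ∀ i, ∀ x ∈ ⋃ j, Isub j, fder (g i x) = (gder i x)⁻¹
  /-- the generator (expansivity) condition: `d_n → 0` -/
  hgen : ∀ ε : ℝ, 0 < ε → ∃ N : ℕ, ∀ w : List (Fin p), N ≤ w.length →
    Metric.diam (cylOf I Isub g w) < ε
  /-- the finite set of forbidden words -/
  Q : Finset (List (Fin p))
  /-- `Σ_Q` is completely invariant: `σ(Σ_Q) = Σ_Q` -/
  hQinv : ∀ ω : ℕ → Fin p, avoids Q ω →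
    ∃ ω' : ℕ → Fin p, avoids Q ω' ∧ ∀ n : ℕ, ω' (n + 1) = ω n
  /-- `f|Λ_Q` is topologically transitive -/
  htrans : ∀ U V : Set ℝ, IsOpen U → IsOpen V →
    (U ∩ limitSetOf I Isub g Q).Nonempty → (V ∩ limitSetOf I Isub g Q).Nonempty →
    ∃ n : ℕ, ∃ x ∈ U ∩ limitSetOf I Isub g Q, f^[n] x ∈ V

namespace ExpansiveMarkovSystem

variable {p : ℕ} (S : ExpansiveMarkovSystem p)

/-- The common domain `⋃ j, I_j` of the maps `g i`. -/
def dom : Set ℝ := ⋃ j, S.Isub j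

/-- The cylinder `Δ_w` associated to the word `w`. -/
def cyl (w : List (Fin p)) : Set ℝ := cylOf S.I S.Isub S.g w

/-- The limit set `Λ_Q`. -/
def limitSet : Set ℝ := limitSetOf S.I S.Isub S.g S.Q

/-- The domain of `f`, i.e. the union of the ranges of the `g i`. -/
def domF : Set ℝ := ⋃ i, S.g i '' S.dom

/-- The derivative `(fⁿ)'(x)` of the `n`-th iterate of `f` at `x`. -/
noncomputable def derIter (n : ℕ) (x : ℝ) : ℝ :=
  ∏ k ∈ Finset.range n, S.fder (S.f^[k] x)

/-- The Lyapunov exponent `χ(x) = limsup (1/n) log |(fⁿ)'(x)|`. -/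
noncomputable def lyap (x : ℝ) : ℝ :=
  Filter.limsup (fun n : ℕ => Real.log |S.derIter n x| / n) Filter.atTop

/-- The set `H` of points of `Λ_Q` with infinitely many hyperbolic instants. -/
def hypSet : Set ℝ :=
  { x ∈ S.limitSet | ∃ c₁ : ℝ, 0 < c₁ ∧ ∃ c₂ : ℝ, 0 < c₂ ∧
      ∃ n : ℕ → ℕ, StrictMono n ∧
        ∃ r : ℕ → ℝ, (∀ k, 0 < r k) ∧ Antitone r ∧
          Filter.Tendsto r Filter.atTop (nhds 0) ∧
          ∀ k : ℕ,
            (∀ y ∈ Metric.ball x (r k), ∀ j < n k, S.f^[j] y ∈ S.domF) ∧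
            c₁ < Metric.diam (S.f^[n k] '' Metric.ball x (r k)) ∧
            (∀ y ∈ Metric.ball x (r k), ∀ z ∈ Metric.ball x (r k),
              |S.derIter (n k) y| / |S.derIter (n k) z| < c₂) }

/-- `x` is a parabolic periodic point: `f^m(x) = x` and `|(f^m)'(x)| = 1`. -/
def IsParabolicPeriodic (x : ℝ) : Prop :=
  x ∈ S.limitSet ∧ ∃ m : ℕ, 1 ≤ m ∧ S.f^[m] x = x ∧ |S.derIter m x| = 1

/-- `ν` is a `t`-conformal (Borel probability) measure supported on `Λ_Q`. -/
def IsConformal (ν : Measure ℝ) (t : ℝ) : Prop :=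
  IsProbabilityMeasure ν ∧ ν S.limitSetᶜ = 0 ∧
    ∀ A : Set ℝ, MeasurableSet A → A ⊆ S.limitSet → Set.InjOn S.f A →
      ν (S.f '' A) = ∫⁻ x in A, ENNReal.ofReal (|S.fder x| ^ t) ∂ν

/-- `t_c = inf {t ≥ 0 : a t-conformal measure on Λ_Q exists}`. -/
noncomputable def tc : ℝ :=
  sInf { t : ℝ | 0 ≤ t ∧ ∃ ν : Measure ℝ, S.IsConformal ν t }

/-- `n` is a hyperbolic time for `x` with exponent `α`. -/
def IsHypTime (α : ℝ) (x : ℝ) (n : ℕ) : Prop :=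
  ∀ k : ℕ, 1 ≤ k → k ≤ n → Real.exp (k * α) ≤ |S.derIter k (S.f^[n - k] x)|

/-- `H_HT(α)`: the points of `Λ_Q` with infinitely many hyperbolic times with exponent `α`. -/
def HHT (α : ℝ) : Set ℝ :=
  { x ∈ S.limitSet | ∀ N : ℕ, ∃ n : ℕ, N ≤ n ∧ S.IsHypTime α x n }

end ExpansiveMarkovSystem


section Aux

lemma wordOf_succ {p : ℕ} (ω : ℕ → Fin p) (n : ℕ) :
    wordOf ω (n+1) = ω 0 :: wordOf (fun t => ω (t+1)) n := by
  simp [wordOf, List.range_succ_eq_map, List.map_map, Function.comp_def, Nat.succ_eq_add_one,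
    Nat.add_comm]

lemma wordOf_length {p : ℕ} (ω : ℕ → Fin p) (n : ℕ) : (wordOf ω n).length = n := by
  simp [wordOf]

lemma cyl_cons_eq {p : ℕ} (I : Set ℝ) (Isub : Fin p → Set ℝ) (g : Fin p → ℝ → ℝ)
    (i : Fin p) (w : List (Fin p)) (hw : w ≠ []) :
    cylOf I Isub g (i :: w) = g i '' cylOf I Isub g w := by
  cases w with
  | nil => exact absurd rfl hw
  | cons j w => rfl

namespace ExpansiveMarkovSystem

variable {p : ℕ} (S : ExpansiveMarkovSystem p)

lemma cyl_cons_subset (i : Fin p) (w : List (Fin p)) :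
    cylOf S.I S.Isub S.g (i :: w) ⊆ S.Isub i := by
  induction w generalizing i with
  | nil => exact le_refl _
  | cons j w ih =>
      intro x hx
      obtain ⟨y, hy, rfl⟩ := hx
      have hydom : y ∈ S.dom := Set.mem_iUnion.2 ⟨j, ih j hy⟩
      exact interior_subset (S.hg_range i ⟨y, hydom, rfl⟩)

lemma cyl_subset_dom (i : Fin p) (w : List (Fin p)) :
    cylOf S.I S.Isub S.g (i :: w) ⊆ S.dom :=
  (S.cyl_cons_subset i w).trans (Set.subset_iUnion _ i)

lemma orbit_step (ω : ℕ → Fin p) (x : ℝ)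
    (h : ∀ n, x ∈ cylOf S.I S.Isub S.g (wordOf ω n)) :
    x = S.g (ω 0) (S.f x) ∧ S.f x ∈ S.dom ∧
      ∀ n, S.f x ∈ cylOf S.I S.Isub S.g (wordOf (fun t => ω (t+1)) n) := by
  have h2 : x ∈ S.g (ω 0) '' S.Isub (ω 1) := by
    have := h 2
    have hw : wordOf ω 2 = [ω 0, ω 1] := rfl
    rw [hw] at this
    exact this
  obtain ⟨y, hy, hxy⟩ := h2
  have hydom : y ∈ S.dom := Set.mem_iUnion.2 ⟨ω 1, hy⟩
  have hfx : S.f x = y := by rw [← hxy]; exact S.hf (ω 0) y hydom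
  have hyI : y ∈ S.I := S.hsubI (ω 1) hy
  refine ⟨by rw [hfx, hxy], hfx ▸ hydom, ?_⟩
  intro n
  cases n with
  | zero => simpa [wordOf, cylOf] using hfx ▸ hyI
  | succ n =>
    have hn := h (n+2)
    rw [show (n+2) = (n+1)+1 from rfl, wordOf_succ] at hn
    rw [cyl_cons_eq S.I S.Isub S.g (ω 0) _
      (by simp [← List.length_pos_iff, wordOf_length])] at hn
    obtain ⟨z, hz, hzx⟩ := hn
    have hzdom : z ∈ S.dom := by
      have : wordOf (fun t => ω (t+1)) (n+1)
          = ω 1 :: wordOf (fun t => ω (t+2)) n := by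
        rw [wordOf_succ]
      rw [this] at hz
      exact S.cyl_subset_dom _ _ hz
    have hzy : z = y := S.hg_inj (ω 0) hzdom hydom (hzx.trans hxy.symm)
    rw [hfx, ← hzy]
    exact hz

lemma orbit (ω : ℕ → Fin p) (x : ℝ)
    (h : ∀ n, x ∈ cylOf S.I S.Isub S.g (wordOf ω n)) (k : ℕ) :
    S.f^[k] x = S.g (ω k) (S.f^[k+1] x) ∧ S.f^[k+1] x ∈ S.dom := by
  have key : ∀ k, ∀ n,
      S.f^[k] x ∈ cylOf S.I S.Isub S.g (wordOf (fun t => ω (t+k)) n) := by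
    intro k
    induction k with
    | zero => simpa using h
    | succ k ih =>
        have hs := S.orbit_step (fun t => ω (t+k)) (S.f^[k] x) ih
        intro n
        have h2 := hs.2.2 n
        rw [Function.iterate_succ_apply']
        have he : (fun t => ω (t + (k+1))) = (fun t => ω (t + 1 + k)) := by
          funext t; congr 1; omega
        rw [he]
        exact h2
  have hs := S.orbit_step (fun t => ω (t+k)) (S.f^[k] x) (key k)
  refine ⟨?_, ?_⟩
  · have h1 := hs.1
    rw [← Function.iterate_succ_apply' S.f k x] at h1
    simpa using h1
  · rw [Function.iterate_succ_apply']
    exact hs.2.1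

lemma fder_orbit (ω : ℕ → Fin p) (x : ℝ)
    (h : ∀ n, x ∈ cylOf S.I S.Isub S.g (wordOf ω n)) (k : ℕ) :
    S.fder (S.f^[k] x) = (S.gder (ω k) (S.f^[k+1] x))⁻¹ ∧
      S.gder (ω k) (S.f^[k+1] x) ≠ 0 ∧ S.f^[k+1] x ∈ S.dom := by
  obtain ⟨h1, h2⟩ := S.orbit ω x h k
  refine ⟨?_, S.hgder_ne (ω k) _ h2, h2⟩
  rw [h1]
  exact S.hfder (ω k) _ h2

lemma dom_compact : IsCompact S.dom := by
  apply isCompact_iUnion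
  intro i
  obtain ⟨a, b, hab, h⟩ := S.hIsub i
  rw [h]; exact isCompact_Icc

lemma dom_nonempty : S.dom.Nonempty := by
  obtain ⟨a, b, hab, h⟩ := S.hIsub ⟨0, S.hp⟩
  exact ⟨a, Set.mem_iUnion.2 ⟨⟨0, S.hp⟩, h ▸ Set.left_mem_Icc.2 hab.le⟩⟩

lemma gder_bounds : ∃ m M : ℝ, 0 < m ∧
    ∀ i, ∀ x ∈ S.dom, m ≤ |S.gder i x| ∧ |S.gder i x| ≤ M := by
  have hc := S.dom_compact
  have hne := S.dom_nonempty
  have hmin : ∀ i : Fin p, ∃ mi : ℝ, 0 < mi ∧ ∀ x ∈ S.dom, mi ≤ |S.gder i x| := by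
    intro i
    obtain ⟨x₀, hx₀, hm⟩ := hc.exists_isMinOn hne ((S.hgder_cont i).abs)
    exact ⟨|S.gder i x₀|, abs_pos.2 (S.hgder_ne i x₀ hx₀), fun x hx => hm hx⟩
  have hmax : ∀ i : Fin p, ∃ Mi : ℝ, ∀ x ∈ S.dom, |S.gder i x| ≤ Mi := by
    intro i
    obtain ⟨x₀, hx₀, hm⟩ := hc.exists_isMaxOn hne ((S.hgder_cont i).abs)
    exact ⟨|S.gder i x₀|, fun x hx => hm hx⟩
  choose mfun hm0 hm using hmin
  choose Mfun hM using hmax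
  haveI : Nonempty (Fin p) := ⟨⟨0, S.hp⟩⟩
  have hu : (Finset.univ : Finset (Fin p)).Nonempty := Finset.univ_nonempty
  refine ⟨Finset.univ.inf' hu mfun, Finset.univ.sup' hu Mfun,
    (Finset.lt_inf'_iff hu).2 fun i _ => hm0 i, fun i x hx => ⟨?_, ?_⟩⟩
  · exact le_trans (Finset.inf'_le _ (Finset.mem_univ i)) (hm i x hx)
  · exact le_trans (hM i x hx) (Finset.le_sup' _ (Finset.mem_univ i))

lemma log_derIter (ω : ℕ → Fin p) (x : ℝ)
    (h : ∀ n, x ∈ cylOf S.I S.Isub S.g (wordOf ω n)) (m k : ℕ) :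
    0 < |S.derIter k (S.f^[m] x)| ∧
      Real.log |S.derIter k (S.f^[m] x)| =
        ∑ j ∈ Finset.range k, Real.log |S.fder (S.f^[m+j] x)| := by
  have hne : ∀ t : ℕ, S.fder (S.f^[t] x) ≠ 0 := by
    intro t
    obtain ⟨h1, h2, _⟩ := S.fder_orbit ω x h t
    rw [h1]
    exact inv_ne_zero h2
  have hprod : S.derIter k (S.f^[m] x) = ∏ j ∈ Finset.range k, S.fder (S.f^[m+j] x) := by
    simp only [derIter]
    refine Finset.prod_congr rfl fun j _ => ?_
    rw [← Function.iterate_add_apply S.f j m x, Nat.add_comm j m]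
  constructor
  · rw [hprod, Finset.abs_prod]
    exact Finset.prod_pos fun j _ => abs_pos.2 (hne _)
  · rw [hprod, Finset.abs_prod, Real.log_prod fun j _ => abs_ne_zero.2 (hne _)]

lemma u_bounds (ω : ℕ → Fin p) (x : ℝ)
    (h : ∀ n, x ∈ cylOf S.I S.Isub S.g (wordOf ω n)) :
    ∃ A B : ℝ, ∀ n : ℕ,
      B ≤ Real.log |S.derIter n x| / n ∧ Real.log |S.derIter n x| / n ≤ A := by
  obtain ⟨m, M, hm, hbd⟩ := S.gder_bounds
  have hfd : ∀ t : ℕ, -Real.log M ≤ Real.log |S.fder (S.f^[t] x)| ∧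
      Real.log |S.fder (S.f^[t] x)| ≤ -Real.log m := by
    intro t
    obtain ⟨h1, h2, h3⟩ := S.fder_orbit ω x h t
    obtain ⟨hml, hMu⟩ := hbd (ω t) _ h3
    rw [h1, abs_inv, Real.log_inv]
    exact ⟨neg_le_neg (Real.log_le_log (abs_pos.2 h2) hMu),
      neg_le_neg (Real.log_le_log hm hml)⟩
  refine ⟨max (-Real.log m) 0, min (-Real.log M) 0, ?_⟩
  intro n
  rcases Nat.eq_zero_or_pos n with rfl | hn
  · simp
  · have hsum := (S.log_derIter ω x h 0 n).2
    simp only [Function.iterate_zero, id_eq, zero_add] at hsum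
    have hpos : (0:ℝ) < n := by exact_mod_cast hn
    have hub : Real.log |S.derIter n x| ≤ n * (-Real.log m) := by
      rw [hsum]
      calc ∑ j ∈ Finset.range n, Real.log |S.fder (S.f^[j] x)|
          ≤ ∑ _j ∈ Finset.range n, (-Real.log m) :=
            Finset.sum_le_sum fun j _ => (hfd j).2
        _ = n * (-Real.log m) := by
            rw [Finset.sum_const, Finset.card_range, nsmul_eq_mul]
    have hlb : (n:ℝ) * (-Real.log M) ≤ Real.log |S.derIter n x| := by
      rw [hsum]
      calc (n:ℝ) * (-Real.log M)
          = ∑ _j ∈ Finset.range n, (-Real.log M) := by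
            rw [Finset.sum_const, Finset.card_range, nsmul_eq_mul]
        _ ≤ ∑ j ∈ Finset.range n, Real.log |S.fder (S.f^[j] x)| :=
            Finset.sum_le_sum fun j _ => (hfd j).1
    constructor
    · rw [le_div_iff₀ hpos]
      nlinarith [min_le_left (-Real.log M) (0:ℝ)]
    · rw [div_le_iff₀ hpos]
      nlinarith [le_max_left (-Real.log m) (0:ℝ)]

end ExpansiveMarkovSystem

end Aux

/-- `{x ∈ Λ_Q : χ(x) > 0} = ⋃_{α > 0} H_HT(α)`: a point of `Λ_Q` has
positive Lyapunov exponent iff it has infinitely many hyperbolic times with some positive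
exponent. -/
theorem pos_lyap_eq_union_HHT {p : ℕ} (S : ExpansiveMarkovSystem p) :
    { x | x ∈ S.limitSet ∧ 0 < S.lyap x } = ⋃ α ∈ Set.Ioi (0 : ℝ), S.HHT α := by
  ext x
  simp only [Set.mem_setOf_eq, Set.mem_iUnion, Set.mem_Ioi, exists_prop]
  constructor
  · rintro ⟨hxΛ, hpos⟩
    obtain ⟨ω, hωQ, hmem⟩ := hxΛ
    have hxΛ' : x ∈ S.limitSet := ⟨ω, hωQ, hmem⟩
    set L := S.lyap x with hL
    refine ⟨L/4, by linarith, hxΛ', ?_⟩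
    have hlog := S.log_derIter ω x hmem
    obtain ⟨A, B, hAB⟩ := S.u_bounds ω x hmem
    set s : ℕ → ℝ := fun n => Real.log |S.derIter n x| with hs
    have hcobdd : Filter.IsCoboundedUnder (· ≤ ·) Filter.atTop
        (fun n : ℕ => s n / n) :=
      (Filter.isBoundedUnder_of ⟨B, fun n => (hAB n).1⟩ :
        Filter.IsBoundedUnder (· ≥ ·) Filter.atTop
          (fun n : ℕ => s n / n)).isCoboundedUnder_le
    have hfreq : ∃ᶠ n in Filter.atTop, L/2 < s n / n :=
      Filter.frequently_lt_of_lt_limsup hcobdd (by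
        rw [hL]
        have : S.lyap x = Filter.limsup (fun n : ℕ => s n / n) Filter.atTop := rfl
        rw [this]
        linarith)
    intro N
    set α : ℝ := L/4 with hαdef
    have hα : 0 < α := by rw [hαdef]; linarith
    set c : ℕ → ℝ := fun n => s n - n * α with hc
    have hCne : (Finset.range (N+1)).Nonempty := ⟨0, Finset.mem_range.2 (by omega)⟩
    set C := (Finset.range (N+1)).sup' hCne c with hC
    obtain ⟨N₁, hN₁⟩ := exists_nat_gt (C / α)
    obtain ⟨n₁, hn₁ge, hn₁⟩ := Filter.frequently_atTop.1 hfreq (max N₁ 1)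
    have hn₁pos : 0 < n₁ := le_trans (le_max_right _ _) hn₁ge
    have hn₁posR : (0:ℝ) < n₁ := by exact_mod_cast hn₁pos
    have hcn₁ : C < c n₁ := by
      have h1 : (n₁ : ℝ) * (L/2) < s n₁ := by
        rw [lt_div_iff₀ hn₁posR] at hn₁
        linarith
      have h2 : C < (N₁:ℝ) * α := by
        rw [div_lt_iff₀ hα] at hN₁
        linarith
      have h3 : (N₁:ℝ) ≤ n₁ := by
        exact_mod_cast le_trans (le_max_left _ _) hn₁ge
      have h4 : (N₁:ℝ) * α ≤ (n₁:ℝ) * α := by nlinarith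
      have h5 : c n₁ = s n₁ - n₁ * α := rfl
      have h6 : (n₁:ℝ) * α = n₁ * (L/4) := by rw [hαdef]
      nlinarith
    have hex : ∃ n, C < c n := ⟨n₁, hcn₁⟩
    set n := Nat.find hex with hn
    have hfind : C < c n := Nat.find_spec hex
    have hrec : ∀ m, m < n → c m ≤ C := fun m hm => not_lt.1 (Nat.find_min hex hm)
    have hNn : N < n := by
      by_contra hcon
      push_neg at hcon
      exact absurd hfind (not_lt.2 (Finset.le_sup' c (Finset.mem_range.2 (by omega))))
    refine ⟨n, by omega, ?_⟩
    intro k hk1 hkn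
    have hmlt : n - k < n := by omega
    have hck : c (n-k) ≤ C := hrec _ hmlt
    set ℓ : ℕ → ℝ := fun t => Real.log |S.fder (S.f^[t] x)| with hℓ
    have hsn : ∀ nn : ℕ, s nn = ∑ j ∈ Finset.range nn, ℓ j := by
      intro nn
      have := (hlog 0 nn).2
      simpa only [Function.iterate_zero_apply, zero_add] using this
    have hsplit : s n = s (n-k) + ∑ j ∈ Finset.range k, ℓ (n-k+j) := by
      have h0 : s n = ∑ j ∈ Finset.range ((n-k)+k), ℓ j := by
        rw [Nat.sub_add_cancel hkn]
        exact hsn n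
      rw [h0, Finset.sum_range_add, ← hsn]
    have hsum2 : ∑ j ∈ Finset.range k, ℓ (n-k+j)
        = Real.log |S.derIter k (S.f^[n-k] x)| := ((hlog (n-k) k).2).symm
    have hcast : ((n-k : ℕ) : ℝ) = (n:ℝ) - (k:ℝ) := Nat.cast_sub hkn
    have hineq : (k:ℝ) * α ≤ Real.log |S.derIter k (S.f^[n-k] x)| := by
      have hcn : c n = s n - n * α := rfl
      have hcm : c (n-k) = s (n-k) - ((n-k:ℕ):ℝ) * α := rfl
      rw [← hsum2]
      have : c (n-k) < c n := lt_of_le_of_lt hck hfind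
      rw [hcn, hcm, hcast] at this
      have := hsplit
      nlinarith [hsplit, lt_of_le_of_lt hck hfind, hcn, hcm]
    have hpos := (hlog (n-k) k).1
    calc Real.exp (k * α) ≤ Real.exp (Real.log |S.derIter k (S.f^[n-k] x)|) :=
          Real.exp_le_exp.2 hineq
      _ = |S.derIter k (S.f^[n-k] x)| := Real.exp_log hpos
  · rintro ⟨α, hα, hxΛ, hHT⟩
    refine ⟨hxΛ, ?_⟩
    obtain ⟨ω, hωQ, hmem⟩ := hxΛ
    obtain ⟨A, B, hAB⟩ := S.u_bounds ω x hmem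
    have hbdd : Filter.IsBoundedUnder (· ≤ ·) Filter.atTop
        (fun n : ℕ => Real.log |S.derIter n x| / n) :=
      Filter.isBoundedUnder_of ⟨A, fun n => (hAB n).2⟩
    have hfreq : ∃ᶠ n in Filter.atTop,
        α ≤ Real.log |S.derIter n x| / n := by
      rw [Filter.frequently_atTop]
      intro N
      obtain ⟨n, hnge, hhyp⟩ := hHT (max N 1)
      have hn1 : 1 ≤ n := le_trans (le_max_right _ _) hnge
      have hnN : N ≤ n := le_trans (le_max_left _ _) hnge
      refine ⟨n, hnN, ?_⟩
      have hkey := hhyp n hn1 (le_refl n)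
      rw [Nat.sub_self, Function.iterate_zero_apply] at hkey
      have hnpos : (0:ℝ) < n := by
        have : (1:ℝ) ≤ n := by exact_mod_cast hn1
        linarith
      rw [le_div_iff₀ hnpos]
      calc α * n = Real.log (Real.exp ((n:ℝ) * α)) := by
            rw [Real.log_exp]; ring
        _ ≤ Real.log |S.derIter n x| :=
            Real.log_le_log (Real.exp_pos _) hkey
    have hle : α ≤ S.lyap x := Filter.le_limsup_of_frequently_le hfreq hbdd
    linarith
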